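/- Let n ≥ 1 and let c ∈ ℝ^n with ∑_{i=1}^n c_i < 1. Then the hyperplane h = {x ∈ ℝ^n : ∑_{i=1}^n c_i x_i = 1} has weight w(h) ≤ 1 − 1/n. -/

import Mathlib

lemma exists_good_rotation (l : List ℝ) (hl : 0 < l.length) (hsum : l.sum ≤ 1) :
    ∃ k, k < l.length ∧ ∀ t, 0 < t → t < l.length → ((l.rotate k).take t).sum < 1 := by
  classical
  set T := l.length with hT
  set s : ℕ → ℝ := fun j => (l.take j).sum with hs
  have hne : ((Finset.range T).image s).Nonempty :=
    ⟨s 0, Finset.mem_image.2 ⟨0, Finset.mem_range.2 hl, rfl⟩⟩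
  set M := ((Finset.range T).image s).max' hne with hM
  have hmem : ∃ j, j < T ∧ s j = M := by
    obtain ⟨j, hj, hjs⟩ := Finset.mem_image.1 (((Finset.range T).image s).max'_mem hne)
    exact ⟨j, Finset.mem_range.1 hj, hjs⟩
  set m := Nat.find hmem with hm
  obtain ⟨hmT, hsm⟩ : m < T ∧ s m = M := Nat.find_spec hmem
  have hmax : ∀ j, j < T → s j ≤ M := fun j hj =>
    Finset.le_max' _ _ (Finset.mem_image.2 ⟨j, Finset.mem_range.2 hj, rfl⟩)
  have hlt : ∀ i, i < m → s i < M := by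
    intro i hi
    have hnot := Nat.find_min hmem hi
    have hiT : i < T := lt_trans hi hmT
    rcases lt_or_eq_of_le (hmax i hiT) with h | h
    · exact h
    · exact absurd ⟨hiT, h⟩ hnot
  have hs0 : s 0 = 0 := by simp [hs]
  have hM0 : 0 ≤ M := hs0 ▸ hmax 0 hl
  have hMpos : 0 < m → 0 < M := fun hm0 => hs0 ▸ hlt 0 hm0
  refine ⟨m, hmT, ?_⟩
  intro t ht htT
  have hmle : m ≤ T := le_of_lt hmT
  rw [List.rotate_eq_drop_append_take hmle]
  have hsumsplit : l.sum = s m + (l.drop m).sum := by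
    conv_lhs => rw [← List.take_append_drop m l]
    rw [List.sum_append]
  by_cases hcase : t ≤ T - m
  · have hlen : t ≤ (l.drop m).length := by rw [List.length_drop]; omega
    rw [List.take_append_of_le_length hlen]
    have hsplit : s (m + t) = s m + ((l.drop m).take t).sum := by
      show (l.take (m+t)).sum = _
      rw [List.take_add, List.sum_append]
    rcases lt_or_eq_of_le (show m + t ≤ T by omega) with hmt | hmt
    · have h1 := hmax (m+t) hmt
      linarith
    · have hmpos : 0 < m := by omega
      have hMp := hMpos hmpos
      have hsT : s (m+t) = l.sum := by
        show (l.take (m+t)).sum = l.sum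
        rw [hmt, hT, List.take_length]
      linarith
  · have hlenD : (l.drop m).length = T - m := by rw [List.length_drop]
    rw [List.take_append, List.take_of_length_le (by omega), hlenD]
    set i := t - (T - m) with hi
    have him : i < m := by omega
    have htake : (l.take m).take i = l.take i := by
      rw [List.take_take, min_eq_left (by omega)]
    rw [htake, List.sum_append]
    have h1 := hlt i him
    linarith
open scoped Classical

noncomputable def goodK (l : List ℝ) : ℕ :=
  if h : ∃ k, k < l.length ∧ ∀ t, 0 < t → t < l.length → ((l.rotate k).take t).sum < 1
  then h.choose else 0

lemma goodK_spec (l : List ℝ) (hl : 0 < l.length) (hsum : l.sum ≤ 1) :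
    goodK l < l.length ∧ ∀ t, 0 < t → t < l.length → ((l.rotate (goodK l)).take t).sum < 1 := by
  have h := exists_good_rotation l hl hsum
  rw [goodK, dif_pos h]
  exact h.choose_spec

/-- prefix sums of `c` along a list -/
noncomputable def psum {n : ℕ} (c : Fin n → ℝ) (L : List (Fin n)) (t : ℕ) : ℝ :=
  ((L.map c).take t).sum

/-- all orderings of `Fin n` -/
noncomputable def OmegaL (n : ℕ) : Finset (List (Fin n)) :=
  ((Finset.univ : Finset (Fin n)).sort (· ≤ ·)).permutations.toFinset

lemma mem_OmegaL {n : ℕ} {L : List (Fin n)} :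
    L ∈ OmegaL n ↔ L.Perm ((Finset.univ : Finset (Fin n)).sort (· ≤ ·)) := by
  rw [OmegaL, List.mem_toFinset, List.mem_permutations]

lemma card_OmegaL {n : ℕ} : (OmegaL n).card = n.factorial := by
  rw [OmegaL, List.toFinset_card_of_nodup (List.nodup_permutations _ (Finset.sort_nodup _ _)),
    List.length_permutations, Finset.length_sort, Finset.card_univ, Fintype.card_fin]

noncomputable def Gt {n : ℕ} (c : Fin n → ℝ) (t : ℕ) : Finset (List (Fin n)) :=
  (OmegaL n).filter (fun L => psum c L t = 1 ∧ ∀ s, 0 < s → s < t → psum c L s ≠ 1)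

noncomputable def Zt {n : ℕ} (c : Fin n → ℝ) : Finset (List (Fin n)) :=
  (OmegaL n).filter (fun L => ∀ s, 0 < s → s ≤ n → psum c L s ≠ 1)

noncomputable def FF {n : ℕ} (c : Fin n → ℝ) (t : ℕ) : Finset (Finset (Fin n)) :=
  Finset.univ.filter (fun S => S.card = t ∧ (S.Nonempty ∧ ∑ i ∈ S, c i = 1))

noncomputable def DD {n : ℕ} (S : Finset (Fin n)) : Finset (List (Fin n) × List (Fin n)) :=
  if h : S.Nonempty then
    (((S.erase (S.min' h)).sort (· ≤ ·)).permutations.toFinset) ×ˢ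
      ((Sᶜ.sort (· ≤ ·)).permutations.toFinset)
  else ∅

noncomputable def buildL {n : ℕ} (c : Fin n → ℝ) (S : Finset (Fin n))
    (p : List (Fin n) × List (Fin n)) : List (Fin n) :=
  if h : S.Nonempty then
    ((S.min' h :: p.1).rotate (goodK ((S.min' h :: p.1).map c))) ++ p.2
  else []

lemma card_DD {n : ℕ} (S : Finset (Fin n)) (hS : S.Nonempty) :
    (DD S).card = (S.card - 1).factorial * (n - S.card).factorial := by
  rw [DD, dif_pos hS, Finset.card_product,
    List.toFinset_card_of_nodup (List.nodup_permutations _ (Finset.sort_nodup _ _)),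
    List.toFinset_card_of_nodup (List.nodup_permutations _ (Finset.sort_nodup _ _)),
    List.length_permutations, List.length_permutations, Finset.length_sort,
    Finset.length_sort, Finset.card_erase_of_mem (S.min'_mem hS), Finset.card_compl,
    Fintype.card_fin]

lemma hp_parts {n : ℕ} (S : Finset (Fin n)) (hS : S.Nonempty)
    (p : List (Fin n) × List (Fin n)) (hp : p ∈ DD S) :
    (↑p.1 : Multiset (Fin n)) = (S.erase (S.min' hS)).val ∧
      (↑p.2 : Multiset (Fin n)) = Sᶜ.val := by
  rw [DD, dif_pos hS, Finset.mem_product] at hp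
  obtain ⟨h1, h2⟩ := hp
  rw [List.mem_toFinset, List.mem_permutations] at h1 h2
  constructor
  · rw [Multiset.coe_eq_coe.2 h1, Finset.sort_eq]
  · rw [Multiset.coe_eq_coe.2 h2, Finset.sort_eq]

lemma block_val {n : ℕ} (S : Finset (Fin n)) (hS : S.Nonempty)
    (p : List (Fin n) × List (Fin n)) (hp : p ∈ DD S) :
    (↑(S.min' hS :: p.1) : Multiset (Fin n)) = S.val := by
  have h := (hp_parts S hS p hp).1
  have h2 : (↑(S.min' hS :: p.1) : Multiset (Fin n)) = S.min' hS ::ₘ ↑p.1 := by simp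
  rw [h2, h, Finset.erase_val, Multiset.cons_erase (by simpa using S.min'_mem hS)]

lemma block_length {n : ℕ} (S : Finset (Fin n)) (hS : S.Nonempty)
    (p : List (Fin n) × List (Fin n)) (hp : p ∈ DD S) :
    (S.min' hS :: p.1).length = S.card := by
  have h := congrArg Multiset.card (block_val S hS p hp)
  simpa using h

lemma block_nodup {n : ℕ} (S : Finset (Fin n)) (hS : S.Nonempty)
    (p : List (Fin n) × List (Fin n)) (hp : p ∈ DD S) :
    (S.min' hS :: p.1).Nodup := by
  have h := block_val S hS p hp
  have : ((S.min' hS :: p.1) : Multiset (Fin n)).Nodup := by rw [h]; exact S.nodup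
  simpa using this

lemma block_map_sum {n : ℕ} (c : Fin n → ℝ) (S : Finset (Fin n)) (hS : S.Nonempty)
    (p : List (Fin n) × List (Fin n)) (hp : p ∈ DD S) :
    ((S.min' hS :: p.1).map c).sum = ∑ i ∈ S, c i := by
  have h := block_val S hS p hp
  have h2 : (((S.min' hS :: p.1).map c : List ℝ) : Multiset ℝ) = S.val.map c := by
    rw [← Multiset.map_coe, h]
  calc ((S.min' hS :: p.1).map c).sum
      = (((S.min' hS :: p.1).map c : List ℝ) : Multiset ℝ).sum := by simp
    _ = (S.val.map c).sum := by rw [h2]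
    _ = ∑ i ∈ S, c i := rfl

lemma univ_val_split {n : ℕ} (S : Finset (Fin n)) :
    S.val + Sᶜ.val = (Finset.univ : Finset (Fin n)).val := by
  have hdisj : S.disjUnion Sᶜ disjoint_compl_right = Finset.univ := by
    ext a; simp [Finset.mem_disjUnion, em]
  rw [← hdisj]; rfl

lemma buildL_spec {n : ℕ} (c : Fin n → ℝ) (S : Finset (Fin n)) (hS : S.Nonempty)
    (p : List (Fin n) × List (Fin n)) (hp : p ∈ DD S) (hsum : ∑ i ∈ S, c i ≤ 1) :
    buildL c S p ∈ OmegaL n ∧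
    (buildL c S p).take S.card
      = ((S.min' hS :: p.1).rotate (goodK ((S.min' hS :: p.1).map c))) ∧
    psum c (buildL c S p) S.card = ∑ i ∈ S, c i ∧
    (∀ s, 0 < s → s < S.card → psum c (buildL c S p) s < 1) := by
  set m := S.min' hS with hm
  set B := m :: p.1 with hB
  set k := goodK (B.map c) with hk
  have hBval : (↑B : Multiset (Fin n)) = S.val := block_val S hS p hp
  have hBlen : B.length = S.card := block_length S hS p hp
  have hBsum : (B.map c).sum = ∑ i ∈ S, c i := block_map_sum c S hS p hp
  have hmaplen : (B.map c).length = S.card := by rw [List.length_map, hBlen]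
  have hcardpos : 0 < S.card := Finset.card_pos.2 hS
  obtain ⟨hklt, hkgood⟩ := goodK_spec (B.map c) (by omega) (by rw [hBsum]; exact hsum)
  rw [hmaplen] at hklt hkgood
  have hbuild : buildL c S p = (B.rotate k) ++ p.2 := by
    rw [buildL, dif_pos hS]
  have hBRlen : (B.rotate k).length = S.card := by rw [List.length_rotate, hBlen]
  have hBRmap : (B.rotate k).map c = (B.map c).rotate k := List.map_rotate c B k
  have htake : (buildL c S p).take S.card = B.rotate k := by
    rw [hbuild, ← hBRlen, List.take_left]
  have hmapsplit : (buildL c S p).map c = ((B.map c).rotate k) ++ p.2.map c := by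
    rw [hbuild, List.map_append, hBRmap]
  have hmaplen2 : ((B.map c).rotate k).length = S.card := by
    rw [List.length_rotate, hmaplen]
  refine ⟨?_, htake, ?_, ?_⟩
  · rw [mem_OmegaL, ← Multiset.coe_eq_coe]
    have h3 : (↑(buildL c S p) : Multiset (Fin n)) = ↑(B.rotate k) + ↑p.2 := by
      rw [hbuild]; simp
    rw [h3, Multiset.coe_eq_coe.2 (List.rotate_perm B k), hBval,
      (hp_parts S hS p hp).2, univ_val_split, Finset.sort_eq]
  · rw [psum, hmapsplit, ← hmaplen2, List.take_left, ← hBsum]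
    exact List.Perm.sum_eq (List.rotate_perm (B.map c) k)
  · intro s hs hsc
    rw [psum, hmapsplit, List.take_append_of_le_length (by omega)]
    exact hkgood s hs (by omega)
lemma goodK_lt (l : List ℝ) (hl : 0 < l.length) : goodK l < l.length := by
  rw [goodK]
  split
  · next h => exact h.choose_spec.1
  · exact hl

lemma buildL_injOn {n : ℕ} (c : Fin n → ℝ) (S : Finset (Fin n)) (hS : S.Nonempty) :
    Set.InjOn (buildL c S) (DD S) := by
  rintro ⟨b₁, l₁⟩ hp₁ ⟨b₂, l₂⟩ hp₂ heq
  have hp₁' : (b₁, l₁) ∈ DD S := hp₁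
  have hp₂' : (b₂, l₂) ∈ DD S := hp₂
  set m := S.min' hS with hm
  set B₁ := m :: b₁ with hB1
  set B₂ := m :: b₂ with hB2
  set k₁ := goodK (B₁.map c) with hk1
  set k₂ := goodK (B₂.map c) with hk2
  have hl1 : B₁.length = S.card := block_length S hS (b₁, l₁) hp₁'
  have hl2 : B₂.length = S.card := block_length S hS (b₂, l₂) hp₂'
  have hcpos : 0 < S.card := Finset.card_pos.2 hS
  have heq' : B₁.rotate k₁ ++ l₁ = B₂.rotate k₂ ++ l₂ := by
    have e1 : buildL c S (b₁, l₁) = B₁.rotate k₁ ++ l₁ := by rw [buildL, dif_pos hS]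
    have e2 : buildL c S (b₂, l₂) = B₂.rotate k₂ ++ l₂ := by rw [buildL, dif_pos hS]
    rw [← e1, ← e2, heq]
  obtain ⟨hrot, hl⟩ := List.append_inj heq'
    (by rw [List.length_rotate, List.length_rotate, hl1, hl2])
  have hBB : B₂ = B₁.rotate ((k₁ + (B₂.length - k₂)) % B₁.length) := by
    have e1 : (B₁.rotate k₁).rotate (B₂.length - k₂)
        = (B₂.rotate k₂).rotate (B₂.length - k₂) := by rw [hrot]
    rw [List.rotate_rotate, List.rotate_rotate] at e1
    have hk2lt : k₂ < B₂.length := by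
      have := goodK_lt (B₂.map c) (by simp [hB2])
      rwa [List.length_map] at this
    have e2 : k₂ + (B₂.length - k₂) = B₂.length := by omega
    rw [e2, List.rotate_length] at e1
    rw [List.rotate_mod, e1]
  set j := (k₁ + (B₂.length - k₂)) % B₁.length with hj
  have hjlt : j < B₁.length := Nat.mod_lt _ (by omega)
  have hnd : B₁.Nodup := block_nodup S hS (b₁, l₁) hp₁'
  have h0 : (0 : ℕ) < B₂.length := by simp [hB2]
  have h0' : (0 : ℕ) < (B₁.rotate j).length := by rw [List.length_rotate]; omega
  have hzero : (0:ℕ) < B₁.length := by simp [hB1]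
  have e5 : m = B₁.get ⟨(0 + j) % B₁.length, Nat.mod_lt _ (by omega)⟩ := by
    calc m = B₂.get ⟨0, h0⟩ := rfl
      _ = (B₁.rotate j).get ⟨0, h0'⟩ := List.get_of_eq hBB ⟨0, h0⟩
      _ = B₁.get ⟨(0 + j) % B₁.length, Nat.mod_lt _ (by omega)⟩ := List.get_rotate B₁ j ⟨0, h0'⟩
  have e6 : B₁.get ⟨0, hzero⟩ = B₁.get ⟨(0 + j) % B₁.length, Nat.mod_lt _ (by omega)⟩ := e5
  have e7 := (List.Nodup.get_inj_iff hnd).1 e6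
  have hj0 : j = 0 := by
    have hval : (0 : ℕ) = (0 + j) % B₁.length := congrArg Fin.val e7
    rw [Nat.zero_add, Nat.mod_eq_of_lt hjlt] at hval
    exact hval.symm
  rw [hj0, List.rotate_zero] at hBB
  have hb : b₁ = b₂ := by
    have h9 : m :: b₂ = m :: b₁ := hBB
    injection h9 with _ h10
    exact h10.symm
  rw [Prod.mk.injEq]
  exact ⟨hb, hl⟩
lemma psum_zero {n : ℕ} (c : Fin n → ℝ) (L : List (Fin n)) : psum c L 0 = 0 := by
  simp [psum]

lemma take_val_eq {n : ℕ} (c : Fin n → ℝ) (S : Finset (Fin n)) (hS : S.Nonempty)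
    (p : List (Fin n) × List (Fin n)) (hp : p ∈ DD S) (hsum : ∑ i ∈ S, c i ≤ 1) :
    (↑((buildL c S p).take S.card) : Multiset (Fin n)) = S.val := by
  obtain ⟨-, htake, -, -⟩ := buildL_spec c S hS p hp hsum
  rw [htake, Multiset.coe_eq_coe.2 (List.rotate_perm _ _), block_val S hS p hp]

lemma FF_card_le {n : ℕ} (c : Fin n → ℝ) {t : ℕ} (ht : 0 < t) (htn : t ≤ n) :
    (FF c t).card * ((t-1).factorial * (n-t).factorial) ≤ (Gt c t).card := by
  have hFFmem : ∀ S ∈ FF c t, S.card = t ∧ S.Nonempty ∧ ∑ i ∈ S, c i = 1 := by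
    intro S hs
    rw [FF, Finset.mem_filter] at hs
    exact ⟨hs.2.1, hs.2.2.1, hs.2.2.2⟩
  have hkey : ((FF c t).sigma (fun S => DD S)).card ≤ (Gt c t).card := by
    apply Finset.card_le_card_of_injOn (fun q => buildL c q.1 q.2)
    · rintro ⟨S, p⟩ hq
      rw [Finset.mem_coe, Finset.mem_sigma] at hq
      obtain ⟨hq1, hq2⟩ := hq
      obtain ⟨hcard, hne, hsum⟩ := hFFmem S hq1
      obtain ⟨hmem, -, hps, hlt⟩ := buildL_spec c S hne p hq2 (le_of_eq hsum)
      rw [Gt, Finset.mem_coe, Finset.mem_filter]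
      refine ⟨hmem, ?_, ?_⟩
      · show psum c (buildL c S p) t = 1
        rw [← hcard, hps, hsum]
      · intro s hs hst
        have := hlt s hs (by omega)
        exact ne_of_lt this
    · rintro ⟨S₁, p₁⟩ hq₁ ⟨S₂, p₂⟩ hq₂ heq
      have hq₁' := Finset.mem_sigma.1 hq₁
      have hq₂' := Finset.mem_sigma.1 hq₂
      obtain ⟨hc1, hne1, hs1⟩ := hFFmem S₁ hq₁'.1
      obtain ⟨hc2, hne2, hs2⟩ := hFFmem S₂ hq₂'.1
      simp only at heq
      have hSS : S₁ = S₂ := by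
        have e1 := take_val_eq c S₁ hne1 p₁ hq₁'.2 (le_of_eq hs1)
        have e2 := take_val_eq c S₂ hne2 p₂ hq₂'.2 (le_of_eq hs2)
        rw [heq] at e1
        rw [hc1] at e1
        rw [hc2] at e2
        have : S₁.val = S₂.val := by rw [← e1, ← e2]
        exact Finset.val_inj.1 this
      subst hSS
      have hpp : p₁ = p₂ := buildL_injOn c S₁ hne1 hq₁'.2 hq₂'.2 heq
      rw [hpp]
  calc (FF c t).card * ((t-1).factorial * (n-t).factorial)
      = ∑ S ∈ FF c t, (DD S).card := by
        rw [Finset.sum_congr rfl (fun S hs => ?_), Finset.sum_const, smul_eq_mul]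
        rw [card_DD S (hFFmem S hs).2.1, (hFFmem S hs).1]
    _ = ((FF c t).sigma (fun S => DD S)).card := (Finset.card_sigma _ _).symm
    _ ≤ (Gt c t).card := hkey

lemma Zt_card_ge {n : ℕ} (hn : 1 ≤ n) (c : Fin n → ℝ) (hsum : ∑ i, c i < 1) :
    (n-1).factorial ≤ (Zt c).card := by
  have huniv : (Finset.univ : Finset (Fin n)).Nonempty := ⟨⟨0, hn⟩, Finset.mem_univ _⟩
  have hcard : (Finset.univ : Finset (Fin n)).card = n := by simp
  have hkey : (DD (Finset.univ : Finset (Fin n))).card ≤ (Zt c).card := by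
    apply Finset.card_le_card_of_injOn (fun p => buildL c Finset.univ p)
    · intro p hp
      obtain ⟨hmem, -, hps, hlt⟩ := buildL_spec c Finset.univ huniv p hp (le_of_lt hsum)
      rw [Zt, Finset.mem_coe, Finset.mem_filter]
      refine ⟨hmem, ?_⟩
      intro s hs hsn
      rcases lt_or_eq_of_le hsn with hlt' | heq'
      · exact ne_of_lt (hlt s hs (by omega))
      · rw [hcard] at hps
        rw [heq', hps]
        exact ne_of_lt hsum
    · exact buildL_injOn c Finset.univ huniv
  refine le_trans (le_of_eq ?_) hkey
  rw [card_DD Finset.univ huniv, hcard, Nat.sub_self, Nat.factorial_zero, mul_one]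

lemma Gt_disjoint {n : ℕ} (c : Fin n → ℝ) {t₁ t₂ : ℕ} (h : t₁ < t₂) :
    Disjoint (Gt c t₁) (Gt c t₂) := by
  rw [Finset.disjoint_left]
  intro L h1 h2
  rw [Gt, Finset.mem_filter] at h1 h2
  rcases Nat.eq_zero_or_pos t₁ with rfl | ht
  · have := h1.2.1
    rw [psum_zero] at this
    norm_num at this
  · exact h2.2.2 t₁ ht h h1.2.1

lemma counting {n : ℕ} (hn : 1 ≤ n) (c : Fin n → ℝ) (hsum : ∑ i, c i < 1) :
    ∑ t ∈ Finset.range (n+1), (FF c t).card * ((t-1).factorial * (n-t).factorial)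
      ≤ n.factorial - (n-1).factorial := by
  have hterm : ∀ t ∈ Finset.range (n+1),
      (FF c t).card * ((t-1).factorial * (n-t).factorial) ≤ (Gt c t).card := by
    intro t hti
    rcases Nat.eq_zero_or_pos t with rfl | ht
    · have hFF0 : FF c 0 = ∅ := by
        ext S
        rw [FF, Finset.mem_filter]
        simp only [Finset.notMem_empty, iff_false]
        rintro ⟨-, h0, hne, -⟩
        have := Finset.card_pos.2 hne
        omega
      simp [hFF0]
    · exact FF_card_le c ht (Nat.lt_succ_iff.1 (Finset.mem_range.1 hti))
  have hsub : (Finset.range (n+1)).biUnion (Gt c) ∪ Zt c ⊆ OmegaL n := by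
    intro L hL
    rcases Finset.mem_union.1 hL with h | h
    · obtain ⟨t, -, hTt⟩ := Finset.mem_biUnion.1 h
      exact Finset.mem_of_mem_filter L hTt
    · exact Finset.mem_of_mem_filter L h
  have hdisjZ : Disjoint ((Finset.range (n+1)).biUnion (Gt c)) (Zt c) := by
    rw [Finset.disjoint_left]
    intro L hL hZ
    obtain ⟨t, htmem, hTt⟩ := Finset.mem_biUnion.1 hL
    rw [Gt, Finset.mem_filter] at hTt
    rw [Zt, Finset.mem_filter] at hZ
    rcases Nat.eq_zero_or_pos t with rfl | ht
    · have h5 := hTt.2.1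
      rw [psum_zero] at h5
      norm_num at h5
    · exact hZ.2 t ht (Nat.lt_succ_iff.1 (Finset.mem_range.1 htmem)) hTt.2.1
  have hdisjG : ∀ t1 ∈ Finset.range (n+1), ∀ t2 ∈ Finset.range (n+1),
      t1 ≠ t2 → Disjoint (Gt c t1) (Gt c t2) := by
    intro t1 _ t2 _ hne
    rcases lt_or_gt_of_ne hne with h | h
    · exact Gt_disjoint c h
    · exact (Gt_disjoint c h).symm
  have hcards : ∑ t ∈ Finset.range (n+1), (Gt c t).card + (Zt c).card ≤ n.factorial := by
    have h1 := Finset.card_le_card hsub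
    rw [Finset.card_union_of_disjoint hdisjZ, Finset.card_biUnion hdisjG, card_OmegaL] at h1
    exact h1
  have hz := Zt_card_ge hn c hsum
  have hG := Finset.sum_le_sum hterm
  omega

open scoped Classical in
/-- The Clifton–Huang weight of the hyperplane `{x : ∑ i, c i * x i = 1}`:
the sum over nonempty subsets `S ⊆ [n]` with `∑_{i ∈ S} c i = 1` of
`1 / (|S| * binom(n, |S|))`. -/
noncomputable def hyperplaneWeight {n : ℕ} (c : Fin n → ℝ) : ℝ :=
  ∑ S : Finset (Fin n),
    if S.Nonempty ∧ ∑ i ∈ S, c i = 1 then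
      1 / (S.card * (n.choose S.card)) else 0

lemma weight_eq {n : ℕ} (c : Fin n → ℝ) :
    hyperplaneWeight c
      = ∑ t ∈ Finset.range (n+1),
          ((FF c t).card : ℝ) * ((((t-1).factorial * (n-t).factorial : ℕ)) : ℝ)
            / (n.factorial : ℝ) := by
  unfold hyperplaneWeight
  rw [← Finset.sum_fiberwise_of_maps_to (g := Finset.card) (t := Finset.range (n+1))
    (fun S _ => Finset.mem_range.2 (by
      have h9 := Finset.card_le_univ S
      simp only [Finset.card_univ, Fintype.card_fin] at h9
      omega))]
  apply Finset.sum_congr rfl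
  intro t htmem
  have htn : t ≤ n := Nat.lt_succ_iff.1 (Finset.mem_range.1 htmem)
  have hinner : ∀ S ∈ Finset.univ.filter (fun S : Finset (Fin n) => S.card = t),
      (if S.Nonempty ∧ ∑ i ∈ S, c i = 1 then (1 : ℝ) / (S.card * (n.choose S.card)) else 0)
      = (if S.Nonempty ∧ ∑ i ∈ S, c i = 1 then
          (((t-1).factorial * (n-t).factorial : ℕ) : ℝ) / (n.factorial : ℝ) else 0) := by
    intro S hS
    have hc : S.card = t := (Finset.mem_filter.1 hS).2
    split_ifs with hcond
    · have htpos : 0 < t := hc ▸ Finset.card_pos.2 hcond.1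
      have hnat : (t * n.choose t) * ((t-1).factorial * (n-t).factorial) = n.factorial := by
        have h1 := Nat.choose_mul_factorial_mul_factorial htn
        have h2 : t * (t-1).factorial = t.factorial := Nat.mul_factorial_pred htpos.ne'
        calc (t * n.choose t) * ((t-1).factorial * (n-t).factorial)
            = n.choose t * (t * (t-1).factorial) * (n-t).factorial := by ring
          _ = n.choose t * t.factorial * (n-t).factorial := by rw [h2]
          _ = n.factorial := h1
      have hpos1 : (0:ℝ) < (t : ℝ) * (n.choose t) := by
        have h3 := Nat.choose_pos htn
        have h4 : (0:ℝ) < (t:ℝ) := by exact_mod_cast htpos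
        have h5 : (0:ℝ) < ((n.choose t : ℕ):ℝ) := by exact_mod_cast h3
        exact mul_pos h4 h5
      rw [hc, div_eq_div_iff (ne_of_gt hpos1) (by positivity), one_mul]
      have hnat' : ((t-1).factorial * (n-t).factorial) * (t * n.choose t) = n.factorial := by
        rw [mul_comm]; exact hnat
      exact_mod_cast hnat'.symm
    · rfl
  rw [Finset.sum_congr rfl hinner, Finset.sum_ite, Finset.sum_const_zero, add_zero,
    Finset.sum_const, nsmul_eq_mul, Finset.filter_filter, mul_div_assoc]
  rfl

theorem weight_le_of_small_sum (n : ℕ) (hn : 1 ≤ n) (c : Fin n → ℝ)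
    (h : ∑ i, c i < 1) :
    hyperplaneWeight c ≤ 1 - 1 / n := by
  have hcount := counting hn c h
  have hfacpos : (0:ℝ) < (n.factorial : ℝ) := by exact_mod_cast n.factorial_pos
  have hstep : hyperplaneWeight c
      = ((∑ t ∈ Finset.range (n+1),
          (FF c t).card * ((t-1).factorial * (n-t).factorial) : ℕ) : ℝ) / n.factorial := by
    rw [weight_eq c, ← Finset.sum_div]
    congr 1
    push_cast
    rfl
  have h2 : ((n.factorial - (n-1).factorial : ℕ) : ℝ) / n.factorial = 1 - 1 / n := by
    rw [Nat.cast_sub (Nat.factorial_le (Nat.sub_le n 1)),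
      sub_div, div_self (ne_of_gt hfacpos)]
    congr 1
    have hkey : (n.factorial : ℝ) = n * (n-1).factorial := by
      exact_mod_cast (Nat.mul_factorial_pred (by omega)).symm
    have hnpos : (0:ℝ) < (n:ℝ) := by exact_mod_cast hn
    have hfpos : (0:ℝ) < ((n-1).factorial : ℝ) := by exact_mod_cast (n-1).factorial_pos
    rw [hkey, div_eq_div_iff (ne_of_gt (mul_pos hnpos hfpos)) (ne_of_gt hnpos)]
    ring
  rw [hstep, ← h2]
  have hle : ((∑ t ∈ Finset.range (n+1),
      (FF c t).card * ((t-1).factorial * (n-t).factorial) : ℕ) : ℝ)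
      ≤ ((n.factorial - (n-1).factorial : ℕ) : ℝ) := by exact_mod_cast hcount
  exact div_le_div_of_nonneg_right hle (le_of_lt hfacpos) |>.trans_eq rfl
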